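/- arXiv:1411.2302 — 3 statements merged into one kernel-verified Lean document; each statement's English description precedes it below -/
import Mathlib

section
/- Let ι be a fixed-point-free involution of {1,…,2n} and let w ∈ S_{2n} be of minimal length among permutations satisfying w⁻¹ ∘ J̄_n ∘ w = ι. Let M be a 2n×2n complex matrix that is lower triangular (M_{ij} = 0 whenever i < j) and satisfies MJ + JMᵀ = 0 (i.e., M lies in the symplectic Lie algebra 𝔰𝔭_n). Then M_{ij} = 0 whenever w⁻¹(i) < w⁻¹(j); equivalently, 𝔟₋ ∩ 𝔰𝔭_n ⊆ w 𝔟₋ w⁻¹, where 𝔟₋ is the set of lower triangular matrices. -/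
open Matrix

/-- A fixed-point-free involution. -/
def isFPF {m : ℕ} (ι : Equiv.Perm (Fin m)) : Prop :=
  ι * ι = 1 ∧ ∀ i, ι i ≠ i

/-- The length (number of inversions) of a permutation of `Fin m`. -/
def invLength {m : ℕ} (π : Equiv.Perm (Fin m)) : ℕ :=
  Finset.card (Finset.univ.filter fun p : Fin m × Fin m => p.1 < p.2 ∧ π p.2 < π p.1)

/-- The fixed-point-free involution `J̄ₙ = 2143⋯(2n)(2n−1)`, in 0-based indexing:
it swaps `2k ↔ 2k+1`. -/
def Jbar (n : ℕ) : Equiv.Perm (Fin (2*n)) where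
  toFun i := ⟨2*(i.val/2) + (1 - i.val % 2), by have := i.isLt; omega⟩
  invFun i := ⟨2*(i.val/2) + (1 - i.val % 2), by have := i.isLt; omega⟩
  left_inv i := by apply Fin.ext; simp only; omega
  right_inv i := by apply Fin.ext; simp only; omega

/-- The `2n × 2n` block-diagonal symplectic form with `2 × 2` diagonal blocks
`[[0,1],[-1,0]]`. -/
def Jmat (n : ℕ) : Matrix (Fin (2*n)) (Fin (2*n)) ℂ :=
  Matrix.of fun i j =>
    if i.val % 2 = 0 ∧ j.val = i.val + 1 then 1
    else if i.val % 2 = 1 ∧ i.val = j.val + 1 then -1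
    else 0

lemma Jbar_val {n : ℕ} (i : Fin (2*n)) :
    ((Jbar n) i).val = 2*(i.val/2) + (1 - i.val % 2) := rfl

lemma Jbar_invol {n : ℕ} (i : Fin (2*n)) : Jbar n (Jbar n i) = i := by
  apply Fin.ext; rw [Jbar_val, Jbar_val]; omega

lemma Jmat_col {n : ℕ} (k b : Fin (2*n)) :
    Jmat n k b = if k = Jbar n b then (if b.val % 2 = 1 then (1:ℂ) else -1) else 0 := by
  have hk : (k = Jbar n b) ↔ (k.val = 2*(b.val/2) + (1 - b.val % 2)) := by
    rw [Fin.ext_iff, Jbar_val]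
  rw [Jmat]; simp only [of_apply, hk]
  split_ifs <;> first | rfl | (exfalso; omega)

lemma Jmat_row {n : ℕ} (a k : Fin (2*n)) :
    Jmat n a k = if k = Jbar n a then (if a.val % 2 = 0 then (1:ℂ) else -1) else 0 := by
  have hk : (k = Jbar n a) ↔ (k.val = 2*(a.val/2) + (1 - a.val % 2)) := by
    rw [Fin.ext_iff, Jbar_val]
  rw [Jmat]; simp only [of_apply, hk]
  split_ifs <;> first | rfl | (exfalso; omega)

lemma sp_rel {n : ℕ} (M : Matrix (Fin (2*n)) (Fin (2*n)) ℂ)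
    (hsp : M * Jmat n + Jmat n * Mᵀ = 0) (a b : Fin (2*n)) :
    M a (Jbar n b) * (if b.val % 2 = 1 then (1:ℂ) else -1)
      + (if a.val % 2 = 0 then (1:ℂ) else -1) * M b (Jbar n a) = 0 := by
  have h1 : (M * Jmat n) a b
      = M a (Jbar n b) * (if b.val % 2 = 1 then (1:ℂ) else -1) := by
    rw [Matrix.mul_apply,
      Finset.sum_congr rfl (fun k _ => by rw [Jmat_col k b])]
    rw [Finset.sum_congr rfl (fun k _ => mul_ite _ (M a k) _ _),
      Finset.sum_congr rfl (fun k _ => by rw [mul_zero])]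
    rw [Finset.sum_ite_eq' Finset.univ (Jbar n b) (fun k => M a k * _)]
    simp
  have h2 : (Jmat n * Mᵀ) a b
      = (if a.val % 2 = 0 then (1:ℂ) else -1) * M b (Jbar n a) := by
    rw [Matrix.mul_apply,
      Finset.sum_congr rfl (fun k _ => by rw [Jmat_row a k])]
    rw [Finset.sum_congr rfl (fun k _ => ite_mul _ _ _ (Mᵀ k b)),
      Finset.sum_congr rfl (fun k _ => by rw [zero_mul])]
    rw [Finset.sum_ite_eq' Finset.univ (Jbar n a) (fun k => _ * Mᵀ k b)]
    simp
  have h := congrFun (congrFun hsp a) b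
  rw [Matrix.add_apply, h1, h2, Matrix.zero_apply] at h
  exact h

lemma swap_val {m : ℕ} (u v z : Fin m) :
    ((Equiv.swap u v) z).val = if z = u then v.val else if z = v then u.val else z.val := by
  rw [Equiv.swap_apply_def]; split_ifs <;> rfl

lemma swap_lt {m : ℕ} {u v x y : Fin m} (huv : u < v) (hv : v.val = u.val + 1)
    (h : Equiv.swap u v x < Equiv.swap u v y) : x < y ∨ (x = v ∧ y = u) := by
  rw [Fin.lt_def, swap_val, swap_val] at h
  have huv' : u.val < v.val := huv
  have key : x.val < y.val ∨ (x.val = v.val ∧ y.val = u.val) := by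
    split_ifs at h <;> simp only [Fin.ext_iff] at * <;> omega
  rcases key with h' | ⟨h1, h2⟩
  · exact Or.inl (Fin.lt_def.mpr h')
  · exact Or.inr ⟨Fin.ext h1, Fin.ext h2⟩

lemma swap_conj_Jbar {n : ℕ} (i j : Fin (2*n)) (hj : j.val % 2 = 0)
    (hi : i.val = j.val + 1) :
    Equiv.swap j i * Jbar n * Equiv.swap j i = Jbar n := by
  have hJj : Jbar n j = i := by apply Fin.ext; rw [Jbar_val]; omega
  have hJi : Jbar n i = j := by apply Fin.ext; rw [Jbar_val]; omega
  ext x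
  simp only [Equiv.Perm.coe_mul, Function.comp_apply]
  rcases eq_or_ne x j with rfl | hxj
  · rw [Equiv.swap_apply_left, hJi, hJj, Equiv.swap_apply_left]
  · rcases eq_or_ne x i with rfl | hxi
    · rw [Equiv.swap_apply_right, hJj, hJi, Equiv.swap_apply_right]
    · rw [Equiv.swap_apply_of_ne_of_ne hxj hxi,
        Equiv.swap_apply_of_ne_of_ne ?_ ?_]
      · intro hc
        apply hxi
        apply Fin.ext
        have := congrArg Fin.val hc
        rw [Jbar_val] at this
        omega
      · intro hc
        apply hxj
        apply Fin.ext
        have := congrArg Fin.val hc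
        rw [Jbar_val] at this
        omega

lemma invLength_swap_lt {m : ℕ} (w : Equiv.Perm (Fin m)) (i j : Fin m)
    (hji : j < i) (hv : i.val = j.val + 1) (hpos : w⁻¹ i < w⁻¹ j) :
    invLength (Equiv.swap j i * w) < invLength w := by
  apply Finset.card_lt_card
  constructor
  · intro p hp
    simp only [Finset.mem_filter, Finset.mem_univ, true_and] at hp ⊢
    simp only [Equiv.Perm.coe_mul, Function.comp_apply] at hp ⊢
    refine ⟨hp.1, ?_⟩
    rcases swap_lt hji hv hp.2 with h | ⟨h1, h2⟩
    · exact h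
    · exfalso
      have e1 : p.2 = w⁻¹ i := Equiv.Perm.eq_inv_iff_eq.mpr h1
      have e2 : p.1 = w⁻¹ j := Equiv.Perm.eq_inv_iff_eq.mpr h2
      rw [e1, e2] at hp
      exact absurd hpos (not_lt.mpr hp.1.le)
  · intro hsub
    have hmem : ((w⁻¹ i, w⁻¹ j) : Fin m × Fin m) ∈
        Finset.univ.filter fun p : Fin m × Fin m => p.1 < p.2 ∧ w p.2 < w p.1 := by
      simp only [Finset.mem_filter, Finset.mem_univ, true_and]
      exact ⟨hpos, by simp [hji]⟩
    have := hsub hmem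
    simp only [Finset.mem_filter, Finset.mem_univ, true_and] at this
    simp only [Equiv.Perm.coe_mul, Function.comp_apply, Equiv.Perm.inv_def, Equiv.apply_symm_apply,
      Equiv.swap_apply_left, Equiv.swap_apply_right] at this
    exact absurd this.2 (not_lt.mpr hji.le)

/-- if `w` is of minimal length with `w⁻¹ ∘ J̄ₙ ∘ w = ι` and `M` is a
lower triangular matrix in `𝔰𝔭ₙ`, then `M_{ij} = 0` whenever `w⁻¹(i) < w⁻¹(j)`;
i.e. `𝔟₋ ∩ 𝔰𝔭ₙ ⊆ w 𝔟₋ w⁻¹`. -/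
theorem lower_triangular_sp_subset {n : ℕ} (ι w : Equiv.Perm (Fin (2*n)))
    (hι : isFPF ι) (hw : w⁻¹ * Jbar n * w = ι)
    (hmin : ∀ v : Equiv.Perm (Fin (2*n)), v⁻¹ * Jbar n * v = ι →
      invLength w ≤ invLength v)
    (M : Matrix (Fin (2*n)) (Fin (2*n)) ℂ)
    (hlow : ∀ i j : Fin (2*n), i < j → M i j = 0)
    (hsp : M * Jmat n + Jmat n * Mᵀ = 0) :
    ∀ i j : Fin (2*n), w⁻¹ i < w⁻¹ j → M i j = 0 := by
  intro i j hij
  rcases lt_trichotomy i j with h | h | h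
  · exact hlow i j h
  · subst h; exact absurd hij (lt_irrefl _)
  · -- here j < i
    by_cases hcase : j.val % 2 = 0 ∧ i.val = j.val + 1
    · -- contradicts minimality: swap j i commutes with Jbar and shortens w
      exfalso
      obtain ⟨hj0, hi1⟩ := hcase
      set v := Equiv.swap j i * w with hv
      have hvι : v⁻¹ * Jbar n * v = ι := by
        have hswap := swap_conj_Jbar i j hj0 hi1
        rw [hv, _root_.mul_inv_rev]
        calc w⁻¹ * (Equiv.swap j i)⁻¹ * Jbar n * (Equiv.swap j i * w)
            = w⁻¹ * ((Equiv.swap j i)⁻¹ * Jbar n * Equiv.swap j i) * w := by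
              group
          _ = w⁻¹ * (Equiv.swap j i * Jbar n * Equiv.swap j i) * w := by
              rw [Equiv.swap_inv]
          _ = w⁻¹ * Jbar n * w := by rw [hswap]
          _ = ι := hw
      have hlt : invLength v < invLength w :=
        invLength_swap_lt w i j h hi1 hij
      exact absurd (hmin v hvι) (not_le.mpr hlt)
    · -- then Jbar j < Jbar i, so use the symplectic relation
      have hJ : Jbar n j < Jbar n i := by
        rw [Fin.lt_def, Jbar_val, Jbar_val]
        have h' : j.val < i.val := h
        omega
      have h0 : M (Jbar n j) (Jbar n i) = 0 := hlow _ _ hJ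
      have hrel := sp_rel M hsp i (Jbar n j)
      rw [Jbar_invol, h0, mul_zero, add_zero] at hrel
      rcases mul_eq_zero.mp hrel with h' | h'
      · exact h'
      · exfalso
        revert h'
        split_ifs <;> norm_num
end

section
/- Let π be a permutation of {1,…,m}, let K be a field, and let A be an m×m matrix over K. Then rank(A_{[i],[j]}) ≤ r_{ij}(π) for all 1 ≤ i, j ≤ m if and only if rank(A_{[i],[j]}) ≤ r_{ij}(π) for every essential box (i,j) of π, where A_{[i],[j]} denotes the northwest i×j submatrix of A consisting of rows 1,…,i and columns 1,…,j. -/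
open Matrix Submodule Module

/-- The rank matrix entry `r_{ij}(π) = #{k ≤ i : π(k) ≤ j}` (0-based indices:
`rkm π i j` is the 1-based entry `r_{i+1, j+1}`). -/
def rkm {m : ℕ} (π : Equiv.Perm (Fin m)) (i j : Fin m) : ℕ :=
  Finset.card (Finset.univ.filter fun k : Fin m => k ≤ i ∧ π k ≤ j)

/-- `(i,j)` is a cell of the Rothe diagram of `π`. -/
def rotheDiag {m : ℕ} (π : Equiv.Perm (Fin m)) (i j : Fin m) : Prop :=
  j < π i ∧ i < π⁻¹ j

/-- An essential box: a Rothe diagram cell with no diagram cell immediately south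
or east of it. -/
def essBox {m : ℕ} (π : Equiv.Perm (Fin m)) (i j : Fin m) : Prop :=
  rotheDiag π i j ∧
  (∀ h : i.val + 1 < m, ¬ rotheDiag π ⟨i.val+1, h⟩ j) ∧
  (∀ h : j.val + 1 < m, ¬ rotheDiag π i ⟨j.val+1, h⟩)

/-- The rank of the northwest `(i+1) × (j+1)` submatrix of `A` (0-based indices). -/
noncomputable def nwRank {m : ℕ} {K : Type*} [Field K] (A : Matrix (Fin m) (Fin m) K)
    (i j : Fin m) : ℕ :=
  (A.submatrix (Fin.castLE i.isLt : Fin (i.val+1) → Fin m) (Fin.castLE j.isLt)).rank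

section RankLemmas

lemma rank_submatrix_le'' {K : Type*} [Field K] {a b c d : Type*}
    [Fintype a] [Fintype b] [Fintype c] [Fintype d]
    (A : Matrix a b K) (f : c → a) (g : d → b) :
    (A.submatrix f g).rank ≤ A.rank := by
  rw [Matrix.rank_eq_finrank_span_row, Matrix.rank_eq_finrank_span_row]
  have h1 : Set.range (A.submatrix f g) ⊆ (LinearMap.funLeft K K g) '' (Set.range A) := by
    rintro _ ⟨i, rfl⟩; exact ⟨A (f i), ⟨f i, rfl⟩, rfl⟩
  calc finrank K (span K (Set.range (A.submatrix f g)))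
      ≤ finrank K (span K ((LinearMap.funLeft K K g) '' (Set.range A))) :=
        Submodule.finrank_mono (span_mono h1)
    _ = finrank K (Submodule.map (LinearMap.funLeft K K g) (span K (Set.range A))) := by
        rw [Submodule.map_span]
    _ ≤ finrank K (span K (Set.range A)) := Submodule.finrank_map_le _ _

lemma rank_le_subrow_add_one {K : Type*} [Field K] {n c : ℕ} (B : Matrix (Fin (n+1)) (Fin c) K) :
    B.rank ≤ (B.submatrix Fin.castSucc id).rank + 1 := by
  rw [Matrix.rank_eq_finrank_span_row, Matrix.rank_eq_finrank_span_row]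
  have h1 : Set.range B ⊆ Set.range (B.submatrix Fin.castSucc id) ∪ {B (Fin.last n)} := by
    rintro _ ⟨i, rfl⟩
    induction i using Fin.lastCases with
    | last => exact Or.inr rfl
    | cast i => exact Or.inl ⟨i, rfl⟩
  calc finrank K (span K (Set.range B))
      ≤ finrank K (span K (Set.range (B.submatrix Fin.castSucc id) ∪ {B (Fin.last n)})) :=
        Submodule.finrank_mono (span_mono h1)
    _ = finrank K ((span K (Set.range (B.submatrix Fin.castSucc id))
          ⊔ span K {B (Fin.last n)} : Submodule K (Fin c → K))) := by
        rw [Submodule.span_union]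
    _ ≤ finrank K (span K (Set.range (B.submatrix Fin.castSucc id)))
          + finrank K (span K {B (Fin.last n)}) :=
        Submodule.finrank_add_le_finrank_add_finrank _ _
    _ ≤ _ + 1 := by
        exact Nat.add_le_add_left
          (le_trans (finrank_span_le_card (R := K) ({B (Fin.last n)} : Set (Fin c → K))) (by simp)) _

lemma rank_le_subcol_add_one {K : Type*} [Field K] {r n : ℕ} (B : Matrix (Fin r) (Fin (n+1)) K) :
    B.rank ≤ (B.submatrix id Fin.castSucc).rank + 1 := by
  rw [← Matrix.rank_transpose B, ← Matrix.rank_transpose (B.submatrix id Fin.castSucc)]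
  exact rank_le_subrow_add_one Bᵀ

end RankLemmas

section NwLemmas
variable {m : ℕ} {K : Type*} [Field K] (A : Matrix (Fin m) (Fin m) K)

lemma nw_row_eq {v : ℕ} (h : v + 1 < m) (j : Fin m) :
    A.submatrix (Fin.castLE (Fin.isLt (⟨v, by omega⟩ : Fin m)) : Fin (v+1) → Fin m)
        (Fin.castLE j.isLt)
      = (A.submatrix (Fin.castLE (Fin.isLt (⟨v+1, h⟩ : Fin m)) : Fin (v+2) → Fin m)
        (Fin.castLE j.isLt)).submatrix Fin.castSucc id := by
  ext a b; rfl

lemma nw_col_eq {w : ℕ} (h : w + 1 < m) (i : Fin m) :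
    A.submatrix (Fin.castLE i.isLt)
        (Fin.castLE (Fin.isLt (⟨w, by omega⟩ : Fin m)) : Fin (w+1) → Fin m)
      = (A.submatrix (Fin.castLE i.isLt)
        (Fin.castLE (Fin.isLt (⟨w+1, h⟩ : Fin m)) : Fin (w+2) → Fin m)).submatrix id Fin.castSucc := by
  ext a b; rfl

lemma nwRank_le_succ_row {v : ℕ} (h : v + 1 < m) (j : Fin m) :
    nwRank A ⟨v, by omega⟩ j ≤ nwRank A ⟨v+1, h⟩ j := by
  unfold nwRank
  rw [nw_row_eq A h j]
  exact rank_submatrix_le'' _ _ _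

lemma nwRank_succ_row_le {v : ℕ} (h : v + 1 < m) (j : Fin m) :
    nwRank A ⟨v+1, h⟩ j ≤ nwRank A ⟨v, by omega⟩ j + 1 := by
  unfold nwRank
  rw [nw_row_eq A h j]
  exact rank_le_subrow_add_one _

lemma nwRank_le_succ_col {w : ℕ} (h : w + 1 < m) (i : Fin m) :
    nwRank A i ⟨w, by omega⟩ ≤ nwRank A i ⟨w+1, h⟩ := by
  unfold nwRank
  rw [nw_col_eq A h i]
  exact rank_submatrix_le'' _ _ _

lemma nwRank_succ_col_le {w : ℕ} (h : w + 1 < m) (i : Fin m) :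
    nwRank A i ⟨w+1, h⟩ ≤ nwRank A i ⟨w, by omega⟩ + 1 := by
  unfold nwRank
  rw [nw_col_eq A h i]
  exact rank_le_subcol_add_one _

lemma nwRank_le_row_card (i j : Fin m) : nwRank A i j ≤ i.val + 1 := by
  unfold nwRank
  exact (Matrix.rank_le_card_height _).trans (by simp)

lemma nwRank_le_col_card (i j : Fin m) : nwRank A i j ≤ j.val + 1 := by
  unfold nwRank
  exact (Matrix.rank_le_card_width _).trans (by simp)

end NwLemmas

section RkLemmas
variable {m : ℕ} (π : Equiv.Perm (Fin m))

lemma one_le_rkm {i j k : Fin m} (hk : k ≤ i) (hπ : π k ≤ j) : 1 ≤ rkm π i j := by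
  have : k ∈ Finset.univ.filter fun k : Fin m => k ≤ i ∧ π k ≤ j := by
    simp only [Finset.mem_filter, Finset.mem_univ, true_and]; exact ⟨hk, hπ⟩
  exact Finset.card_pos.mpr ⟨k, this⟩

lemma rkm_succ_row_of_le {v : ℕ} (h : v + 1 < m) (j : Fin m)
    (hc : π ⟨v+1, h⟩ ≤ j) :
    rkm π ⟨v+1, h⟩ j = rkm π ⟨v, by omega⟩ j + 1 := by
  classical
  unfold rkm
  rw [show (Finset.univ.filter fun k : Fin m => k ≤ ⟨v+1, h⟩ ∧ π k ≤ j)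
      = insert ⟨v+1, h⟩ (Finset.univ.filter fun k : Fin m => k ≤ ⟨v, by omega⟩ ∧ π k ≤ j)
      from ?_]
  · refine Finset.card_insert_of_notMem ?_
    simp only [Finset.mem_filter, Finset.mem_univ, true_and, not_and]
    intro hk
    exact absurd (show v + 1 ≤ v from hk) (by omega)
  · ext k
    simp only [Finset.mem_filter, Finset.mem_insert, Finset.mem_univ, true_and]
    constructor
    · rintro ⟨hk, hπk⟩
      have hk' : k.val ≤ v + 1 := hk
      rcases Nat.lt_or_ge k.val (v+1) with hlt | hge
      · exact Or.inr ⟨show k.val ≤ v by omega, hπk⟩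
      · exact Or.inl (Fin.ext (show k.val = v + 1 by omega))
    · rintro (rfl | ⟨hk, hπk⟩)
      · exact ⟨le_rfl, hc⟩
      · exact ⟨show k.val ≤ v + 1 from le_trans (show k.val ≤ v from hk) (by omega), hπk⟩

lemma rkm_succ_row_of_gt {v : ℕ} (h : v + 1 < m) (j : Fin m)
    (hc : j < π ⟨v+1, h⟩) :
    rkm π ⟨v+1, h⟩ j = rkm π ⟨v, by omega⟩ j := by
  unfold rkm
  congr 1
  ext k
  simp only [Finset.mem_filter, Finset.mem_univ, true_and]
  constructor
  · rintro ⟨hk, hπk⟩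
    have hk' : k.val ≤ v + 1 := hk
    refine ⟨?_, hπk⟩
    rcases Nat.lt_or_ge k.val (v+1) with hlt | hge
    · exact show k.val ≤ v by omega
    · exfalso
      have hkeq : k = ⟨v+1, h⟩ := Fin.ext (show k.val = v + 1 by omega)
      rw [hkeq] at hπk
      exact absurd hπk (not_le.mpr hc)
  · rintro ⟨hk, hπk⟩
    exact ⟨show k.val ≤ v + 1 from le_trans (show k.val ≤ v from hk) (by omega), hπk⟩

lemma rkm_succ_col_of_le {w : ℕ} (h : w + 1 < m) (i : Fin m)
    (hc : π⁻¹ ⟨w+1, h⟩ ≤ i) :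
    rkm π i ⟨w+1, h⟩ = rkm π i ⟨w, by omega⟩ + 1 := by
  classical
  unfold rkm
  have hππ : π (π⁻¹ ⟨w+1, h⟩) = ⟨w+1, h⟩ := Equiv.apply_symm_apply π _
  rw [show (Finset.univ.filter fun k : Fin m => k ≤ i ∧ π k ≤ ⟨w+1, h⟩)
      = insert (π⁻¹ ⟨w+1, h⟩)
          (Finset.univ.filter fun k : Fin m => k ≤ i ∧ π k ≤ ⟨w, by omega⟩)
      from ?_]
  · refine Finset.card_insert_of_notMem ?_
    simp only [Finset.mem_filter, Finset.mem_univ, true_and, not_and]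
    intro _ hle
    rw [hππ] at hle
    exact absurd (show w + 1 ≤ w from hle) (by omega)
  · ext k
    simp only [Finset.mem_filter, Finset.mem_insert, Finset.mem_univ, true_and]
    constructor
    · rintro ⟨hk, hπk⟩
      have hπk' : (π k).val ≤ w + 1 := hπk
      rcases Nat.lt_or_ge (π k).val (w+1) with hlt | hge
      · exact Or.inr ⟨hk, show (π k).val ≤ w by omega⟩
      · refine Or.inl ?_
        have : π k = ⟨w+1, h⟩ := Fin.ext (show (π k).val = w + 1 by omega)
        rw [← this, Equiv.Perm.coe_inv, Equiv.symm_apply_apply]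
    · rintro (rfl | ⟨hk, hπk⟩)
      · exact ⟨hc, le_of_eq hππ⟩
      · exact ⟨hk, show (π k).val ≤ w + 1 from le_trans (show (π k).val ≤ w from hπk) (by omega)⟩

lemma rkm_succ_col_of_gt {w : ℕ} (h : w + 1 < m) (i : Fin m)
    (hc : i < π⁻¹ ⟨w+1, h⟩) :
    rkm π i ⟨w+1, h⟩ = rkm π i ⟨w, by omega⟩ := by
  unfold rkm
  congr 1
  ext k
  simp only [Finset.mem_filter, Finset.mem_univ, true_and]
  constructor
  · rintro ⟨hk, hπk⟩
    have hπk' : (π k).val ≤ w + 1 := hπk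
    refine ⟨hk, ?_⟩
    rcases Nat.lt_or_ge (π k).val (w+1) with hlt | hge
    · exact show (π k).val ≤ w by omega
    · exfalso
      have : π k = ⟨w+1, h⟩ := Fin.ext (show (π k).val = w + 1 by omega)
      have hkk : k = π⁻¹ ⟨w+1, h⟩ := by rw [← this, Equiv.Perm.coe_inv, Equiv.symm_apply_apply]
      rw [hkk] at hk
      exact absurd hk (not_le.mpr hc)
  · rintro ⟨hk, hπk⟩
    exact ⟨hk, show (π k).val ≤ w + 1 from le_trans (show (π k).val ≤ w from hπk) (by omega)⟩

end RkLemmas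

/-- Fulton: the northwest rank conditions of a permutation hold
everywhere iff they hold at the essential boxes. -/
theorem rank_conditions_iff_essential {m : ℕ} {K : Type*} [Field K]
    (π : Equiv.Perm (Fin m)) (A : Matrix (Fin m) (Fin m) K) :
    (∀ i j : Fin m, nwRank A i j ≤ rkm π i j) ↔
      (∀ i j : Fin m, essBox π i j → nwRank A i j ≤ rkm π i j) := by
  classical
  constructor
  · intro h i j _
    exact h i j
  · intro hE
    suffices H : ∀ n : ℕ, ∀ i j : Fin m,
        (if rotheDiag π i j then 2*m - i.val - j.val else 2*m + i.val + j.val) ≤ n →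
        nwRank A i j ≤ rkm π i j by
      intro i j
      exact H _ i j le_rfl
    intro n
    induction n with
    | zero =>
      intro i j hle
      have hi := i.isLt
      have hj := j.isLt
      by_cases hD : rotheDiag π i j
      · rw [if_pos hD] at hle; omega
      · rw [if_neg hD] at hle; omega
    | succ n ih =>
      intro i j hle
      have hi := i.isLt
      have hj := j.isLt
      by_cases hD : rotheDiag π i j
      · rw [if_pos hD] at hle
        by_cases hEss : essBox π i j
        · exact hE i j hEss
        · have hBC : ¬((∀ h : i.val+1 < m, ¬rotheDiag π ⟨i.val+1, h⟩ j)
              ∧ (∀ h : j.val+1 < m, ¬rotheDiag π i ⟨j.val+1, h⟩)) :=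
            fun hc => hEss ⟨hD, hc.1, hc.2⟩
          rcases not_and_or.mp hBC with hB | hC
          · push_neg at hB
            obtain ⟨h1, hD'⟩ := hB
            have hgt : j < π ⟨i.val+1, h1⟩ := hD'.1
            calc nwRank A i j ≤ nwRank A ⟨i.val+1, h1⟩ j := nwRank_le_succ_row A h1 j
              _ ≤ rkm π ⟨i.val+1, h1⟩ j := by
                  refine ih ⟨i.val+1, h1⟩ j ?_
                  rw [if_pos hD']
                  show 2*m - (i.val+1) - j.val ≤ n
                  omega
              _ = rkm π i j := rkm_succ_row_of_gt π h1 j hgt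
          · push_neg at hC
            obtain ⟨h1, hD'⟩ := hC
            have hgt : i < π⁻¹ ⟨j.val+1, h1⟩ := hD'.2
            calc nwRank A i j ≤ nwRank A i ⟨j.val+1, h1⟩ := nwRank_le_succ_col A h1 i
              _ ≤ rkm π i ⟨j.val+1, h1⟩ := by
                  refine ih i ⟨j.val+1, h1⟩ ?_
                  rw [if_pos hD']
                  show 2*m - i.val - (j.val+1) ≤ n
                  omega
              _ = rkm π i j := rkm_succ_col_of_gt π h1 i hgt
      · rw [if_neg hD] at hle
        rcases not_and_or.mp hD with hπle | hπinv
        · have hπle : π i ≤ j := not_lt.mp hπle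
          rcases Nat.eq_zero_or_pos i.val with hz | hpos
          · have h1 : nwRank A i j ≤ 1 := by
              have := nwRank_le_row_card A i j
              omega
            have h2 : 1 ≤ rkm π i j := one_le_rkm π (le_refl i) hπle
            omega
          · obtain ⟨v, hv⟩ : ∃ v, i.val = v + 1 := ⟨i.val - 1, by omega⟩
            have h1m : v + 1 < m := hv ▸ i.isLt
            have hieq : i = ⟨v+1, h1m⟩ := Fin.ext hv
            subst hieq
            have hvm : v < m := by omega
            calc nwRank A ⟨v+1, h1m⟩ j ≤ nwRank A ⟨v, hvm⟩ j + 1 := nwRank_succ_row_le A h1m j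
              _ ≤ rkm π ⟨v, hvm⟩ j + 1 := by
                  refine Nat.add_le_add_right (ih ⟨v, hvm⟩ j ?_) 1
                  by_cases hD2 : rotheDiag π ⟨v, hvm⟩ j
                  · rw [if_pos hD2]
                    show 2*m - v - j.val ≤ n
                    omega
                  · rw [if_neg hD2]
                    show 2*m + v + j.val ≤ n
                    omega
              _ = rkm π ⟨v+1, h1m⟩ j := (rkm_succ_row_of_le π h1m j hπle).symm
        · have hπle : π⁻¹ j ≤ i := not_lt.mp hπinv
          have hππ : π (π⁻¹ j) = j := Equiv.apply_symm_apply π j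
          rcases Nat.eq_zero_or_pos j.val with hz | hpos
          · have h1 : nwRank A i j ≤ 1 := by
              have := nwRank_le_col_card A i j
              omega
            have h2 : 1 ≤ rkm π i j := one_le_rkm π hπle (le_of_eq hππ)
            omega
          · obtain ⟨w, hw⟩ : ∃ w, j.val = w + 1 := ⟨j.val - 1, by omega⟩
            have h1m : w + 1 < m := hw ▸ j.isLt
            have hjeq : j = ⟨w+1, h1m⟩ := Fin.ext hw
            subst hjeq
            have hwm : w < m := by omega
            calc nwRank A i ⟨w+1, h1m⟩ ≤ nwRank A i ⟨w, hwm⟩ + 1 := nwRank_succ_col_le A h1m i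
              _ ≤ rkm π i ⟨w, hwm⟩ + 1 := by
                  refine Nat.add_le_add_right (ih i ⟨w, hwm⟩ ?_) 1
                  by_cases hD2 : rotheDiag π i ⟨w, hwm⟩
                  · rw [if_pos hD2]
                    show 2*m - i.val - w ≤ n
                    omega
                  · rw [if_neg hD2]
                    show 2*m + i.val + w ≤ n
                    omega
              _ = rkm π i ⟨w+1, h1m⟩ := (rkm_succ_col_of_le π h1m i hπle).symm
end

section
/- Let A be an invertible antisymmetric 2n×2n complex matrix (Aᵀ = −A). Then there exist an invertible lower triangular 2n×2n complex matrix b and a fixed-point-free involution ι of {1,…,2n} such that A = b S_ι bᵀ, where S_ι is the antisymmetric matrix with (S_ι)_{i,ι(i)} = 1 if i < ι(i), (S_ι)_{i,ι(i)} = −1 if i > ι(i), and all other entries 0. Moreover the involution ι is uniquely determined by A. (This realizes the correspondence between Sp_n orbits on the flag manifold, equivalently B₋-congruence orbits on invertible antisymmetric matrices via M ↦ MJMᵀ, and fixed-point-free involutions.) -/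
open Matrix

/-- The antisymmetric permutation-like matrix `S_ι` of a fixed-point-free involution:
`(S_ι)_{i, ι(i)} = 1` if `i < ι(i)`, `-1` if `i > ι(i)`, all other entries `0`. -/
def Smat {m : ℕ} (ι : Equiv.Perm (Fin m)) : Matrix (Fin m) (Fin m) ℂ :=
  Matrix.of fun i j => if ι i = j then (if i < j then (1:ℂ) else -1) else 0

namespace CongrOrbit

variable {m : ℕ}

lemma sum_ite_mul (k0 : Fin m) (c : ℂ) (f : Fin m → ℂ) :
    (∑ k, (if k = k0 then c else 0) * f k) = c * f k0 := by
  rw [Finset.sum_eq_single k0]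
  · simp
  · intro b _ hb; simp [hb]
  · simp

lemma sum_mul_ite (k0 : Fin m) (c : ℂ) (f : Fin m → ℂ) :
    (∑ k, f k * (if k = k0 then c else 0)) = f k0 * c := by
  rw [Finset.sum_eq_single k0]
  · simp
  · intro b _ hb; simp [hb]
  · simp

/-- Corner of product with lower triangular on the left. -/
lemma corner_mul_left {p : ℕ} (hp : p ≤ m) {α : Type} [Fintype α]
    (b M : Matrix (Fin m) (Fin m) ℂ)
    (hb : ∀ i j, i < j → b i j = 0) (f : α → Fin m) :
    (b * M).submatrix (Fin.castLE hp) f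
      = b.submatrix (Fin.castLE hp) (Fin.castLE hp) * M.submatrix (Fin.castLE hp) f := by
  ext i j
  simp only [submatrix_apply, mul_apply]
  symm
  have hmap : ∑ x : Fin p, b (Fin.castLE hp i) (Fin.castLE hp x) * M (Fin.castLE hp x) (f j)
      = ∑ k ∈ Finset.univ.map (Fin.castLEEmb hp), b (Fin.castLE hp i) k * M k (f j) := by
    rw [Finset.sum_map]; rfl
  rw [hmap]
  apply Finset.sum_subset (Finset.subset_univ _)
  intro k _ hk
  have hk' : p ≤ k.val := by
    by_contra h
    exact hk (Finset.mem_map.mpr ⟨⟨k.val, Nat.lt_of_not_le h⟩, Finset.mem_univ _, by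
      simp [Fin.castLEEmb]⟩)
  have hlt : Fin.castLE hp i < k := by
    have : (i : ℕ) < p := i.isLt
    simp only [Fin.lt_def, Fin.coe_castLE]
    omega
  rw [hb _ _ hlt, zero_mul]

lemma corner_mul_right {q : ℕ} (hq : q ≤ m) {α : Type} [Fintype α]
    (b M : Matrix (Fin m) (Fin m) ℂ)
    (hb : ∀ i j, i < j → b i j = 0) (f : α → Fin m) :
    (M * bᵀ).submatrix f (Fin.castLE hq)
      = M.submatrix f (Fin.castLE hq) * (b.submatrix (Fin.castLE hq) (Fin.castLE hq))ᵀ := by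
  have h := corner_mul_left hq b Mᵀ hb f
  have h2 := congrArg Matrix.transpose h
  rw [transpose_submatrix, transpose_mul, transpose_transpose] at h2
  rw [h2, transpose_mul, transpose_submatrix, transpose_transpose]

lemma lower_tri_diag_ne_zero {b : Matrix (Fin m) (Fin m) ℂ}
    (hbu : IsUnit b) (hbt : ∀ i j, i < j → b i j = 0) : ∀ i, b i i ≠ 0 := by
  have hdet : IsUnit b.det := (Matrix.isUnit_iff_isUnit_det b).mp hbu
  have h1 : b.det = ∏ i, b i i :=
    Matrix.det_of_lowerTriangular b (fun i j h => hbt i j h)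
  intro i hi
  rw [h1] at hdet
  rw [isUnit_iff_ne_zero] at hdet
  exact hdet (Finset.prod_eq_zero (Finset.mem_univ i) hi)

lemma corner_det_isUnit {p : ℕ} (hp : p ≤ m) {b : Matrix (Fin m) (Fin m) ℂ}
    (hbu : IsUnit b) (hbt : ∀ i j, i < j → b i j = 0) :
    IsUnit (b.submatrix (Fin.castLE hp) (Fin.castLE hp)).det := by
  have htri : ∀ i j : Fin p, i < j → (b.submatrix (Fin.castLE hp) (Fin.castLE hp)) i j = 0 := by
    intro i j hij
    apply hbt
    rw [Fin.lt_def] at hij ⊢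
    simpa using hij
  rw [Matrix.det_of_lowerTriangular _ (fun i j h => htri i j h), isUnit_iff_ne_zero]
  exact Finset.prod_ne_zero_iff.mpr fun i _ => lower_tri_diag_ne_zero hbu hbt _

/-- corner rank is invariant under lower-triangular congruence. -/
lemma rank_corner_congr {p q : ℕ} (hp : p ≤ m) (hq : q ≤ m)
    {b : Matrix (Fin m) (Fin m) ℂ} (M : Matrix (Fin m) (Fin m) ℂ)
    (hbu : IsUnit b) (hbt : ∀ i j, i < j → b i j = 0) :
    ((b * M * bᵀ).submatrix (Fin.castLE hp) (Fin.castLE hq)).rank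
      = (M.submatrix (Fin.castLE hp) (Fin.castLE hq)).rank := by
  have h1 : (b * M * bᵀ) = b * (M * bᵀ) := by rw [Matrix.mul_assoc]
  rw [h1, corner_mul_left hp b (M * bᵀ) hbt _, corner_mul_right hq b M hbt _,
    Matrix.rank_mul_eq_right_of_isUnit_det _ _ (corner_det_isUnit hp hbu hbt)]
  rw [Matrix.rank_mul_eq_left_of_isUnit_det _ _ (by
    rw [Matrix.det_transpose]; exact corner_det_isUnit hq hbu hbt)]

def Ncount (ι : Equiv.Perm (Fin m)) (p q : ℕ) : ℕ :=
  (Finset.univ.filter fun k : Fin m => k.val < p ∧ (ι k).val < q).card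

lemma rank_corner_smat {p q : ℕ} (hp : p ≤ m) (hq : q ≤ m) (ι : Equiv.Perm (Fin m)) :
    ((Smat ι).submatrix (Fin.castLE hp) (Fin.castLE hq)).rank = Ncount ι p q := by
  classical
  set T := (Smat ι).submatrix (Fin.castLE hp) (Fin.castLE hq) with hTdef
  have hT : ∀ (i : Fin p) (j : Fin q),
      T i j = if (Fin.castLE hq j : Fin m) = ι (Fin.castLE hp i)
        then (if Fin.castLE hp i < ι (Fin.castLE hp i) then (1:ℂ) else -1) else 0 := by
    intro i j
    simp only [hTdef, submatrix_apply, Smat, Matrix.of_apply]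
    rcases eq_or_ne (ι (Fin.castLE hp i)) (Fin.castLE hq j) with h | h
    · rw [if_pos h, if_pos h.symm, ← h]
    · rw [if_neg h, if_neg (Ne.symm h)]
  have hTzero : ∀ (i : Fin p), ¬ (ι (Fin.castLE hp i)).val < q → ∀ j, T i j = 0 := by
    intro i hlt j
    rw [hT i j, if_neg]
    intro h
    exact hlt (by rw [← h]; exact j.isLt)
  have h1 : T * Tᵀ = Matrix.diagonal
      (fun i : Fin p => if (ι (Fin.castLE hp i)).val < q then (1:ℂ) else 0) := by
    ext i i'
    rw [Matrix.mul_apply]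
    simp only [transpose_apply]
    by_cases hlt : (ι (Fin.castLE hp i)).val < q
    · set j0 : Fin q := ⟨(ι (Fin.castLE hp i)).val, hlt⟩ with hj0
      have hcast : (Fin.castLE hq j0 : Fin m) = ι (Fin.castLE hp i) := Fin.ext rfl
      have hterm : ∀ j : Fin q, T i j * T i' j
          = if j = j0 then T i j0 * T i' j0 else 0 := by
        intro j
        by_cases hj : j = j0
        · rw [if_pos hj, hj]
        · rw [if_neg hj]
          have : T i j = 0 := by
            rw [hT i j, if_neg]
            intro h
            apply hj
            have hv := congrArg Fin.val h
            simp only [Fin.coe_castLE] at hv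
            exact Fin.ext (by rw [hj0]; exact hv)
          rw [this, zero_mul]
      rw [Finset.sum_congr rfl fun j _ => hterm j, Finset.sum_ite_eq' Finset.univ j0]
      rw [if_pos (Finset.mem_univ _)]
      by_cases hii : i = i'
      · subst hii
        rw [Matrix.diagonal_apply_eq, if_pos hlt, hT i j0, if_pos hcast]
        by_cases hs : Fin.castLE hp i < ι (Fin.castLE hp i) <;> simp [hs]
      · rw [Matrix.diagonal_apply_ne _ hii]
        have : T i' j0 = 0 := by
          rw [hT i' j0, if_neg]
          rw [hcast]
          intro h
          exact hii (Fin.castLE_injective hp (ι.injective h))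
        rw [this, mul_zero]
    · rw [Finset.sum_eq_zero fun j _ => by rw [hTzero i hlt j, zero_mul]]
      by_cases hii : i = i'
      · subst hii; rw [Matrix.diagonal_apply_eq, if_neg hlt]
      · rw [Matrix.diagonal_apply_ne _ hii]
  have h2 : (T * Tᵀ) * T = T := by
    rw [h1]
    ext i j
    rw [Matrix.diagonal_mul]
    by_cases hlt : (ι (Fin.castLE hp i)).val < q
    · rw [if_pos hlt, one_mul]
    · rw [if_neg hlt, zero_mul, hTzero i hlt j]
  have hrank : T.rank = (T * Tᵀ).rank := by
    apply le_antisymm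
    · conv_lhs => rw [← h2]
      exact Matrix.rank_mul_le_left _ _
    · exact Matrix.rank_mul_le_left _ _
  rw [hrank, h1, Matrix.rank_diagonal]
  rw [Fintype.card_subtype]
  unfold Ncount
  apply Finset.card_bij (fun (i : Fin p) _ => (Fin.castLE hp i : Fin m))
  · intro i hi
    simp only [Finset.mem_filter, Finset.mem_univ, true_and] at hi ⊢
    refine ⟨i.isLt, ?_⟩
    by_contra h
    exact hi (by rw [if_neg h])
  · intro i hi i' hi' h
    exact Fin.castLE_injective hp h
  · intro k hk
    simp only [Finset.mem_filter, Finset.mem_univ, true_and] at hk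
    refine ⟨⟨k.val, hk.1⟩, ?_, by apply Fin.ext; simp⟩
    simp only [Finset.mem_filter, Finset.mem_univ, true_and]
    have : (Fin.castLE hp ⟨k.val, hk.1⟩ : Fin m) = k := by apply Fin.ext; simp
    rw [this, if_pos hk.2]
    simp

lemma Ncount_succ (ι : Equiv.Perm (Fin m)) (i : Fin m) (q : ℕ) :
    Ncount ι (i.val + 1) q = Ncount ι i.val q + if (ι i).val < q then 1 else 0 := by
  classical
  unfold Ncount
  by_cases hc : (ι i).val < q
  · rw [if_pos hc]
    have hset : (Finset.univ.filter fun k : Fin m => k.val < i.val + 1 ∧ (ι k).val < q)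
        = insert i (Finset.univ.filter fun k : Fin m => k.val < i.val ∧ (ι k).val < q) := by
      ext k
      simp only [Finset.mem_filter, Finset.mem_insert, Finset.mem_univ, true_and]
      constructor
      · rintro ⟨hk, hq'⟩
        rcases Nat.lt_succ_iff_lt_or_eq.mp hk with h | h
        · exact Or.inr ⟨h, hq'⟩
        · exact Or.inl (Fin.ext h)
      · rintro (rfl | ⟨hk, hq'⟩)
        · exact ⟨Nat.lt_succ_self _, hc⟩
        · exact ⟨Nat.lt_succ_of_lt hk, hq'⟩
    rw [hset, Finset.card_insert_of_notMem (by simp)]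
  · rw [if_neg hc, add_zero]
    congr 1
    ext k
    simp only [Finset.mem_filter, Finset.mem_univ, true_and]
    constructor
    · rintro ⟨hk, hq'⟩
      rcases Nat.lt_succ_iff_lt_or_eq.mp hk with h | h
      · exact ⟨h, hq'⟩
      · exact absurd ((Fin.ext h : k = i) ▸ hq') hc
    · rintro ⟨hk, hq'⟩
      exact ⟨Nat.lt_succ_of_lt hk, hq'⟩

lemma perm_eq_of_Ncount {ι ι' : Equiv.Perm (Fin m)}
    (h : ∀ p q, p ≤ m → q ≤ m → Ncount ι p q = Ncount ι' p q) : ι = ι' := by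
  apply Equiv.ext
  intro i
  have key : ∀ q, q ≤ m → ((ι i).val < q ↔ (ι' i).val < q) := by
    intro q hq
    have h1 := h (i.val + 1) q (Nat.succ_le_of_lt i.isLt) hq
    have h2 := h i.val q (le_of_lt i.isLt) hq
    rw [Ncount_succ, Ncount_succ, h2] at h1
    have h3 := Nat.add_left_cancel h1
    by_cases c1 : (ι i).val < q <;> by_cases c2 : (ι' i).val < q <;>
      simp [c1, c2] at h3 ⊢
  have hle1 : (ι i).val ≤ (ι' i).val := by
    have := (key ((ι' i).val + 1) (Nat.succ_le_of_lt (ι' i).isLt)).mpr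
      (Nat.lt_succ_self _)
    omega
  have hle2 : (ι' i).val ≤ (ι i).val := by
    have := (key ((ι i).val + 1) (Nat.succ_le_of_lt (ι i).isLt)).mp
      (Nat.lt_succ_self _)
    omega
  exact Fin.ext (le_antisymm hle1 hle2)

lemma unique_invol {b c : Matrix (Fin m) (Fin m) ℂ} {ι ι' : Equiv.Perm (Fin m)}
    (hbu : IsUnit b) (hbt : ∀ i j, i < j → b i j = 0)
    (hcu : IsUnit c) (hct : ∀ i j, i < j → c i j = 0)
    (heq : b * Smat ι * bᵀ = c * Smat ι' * cᵀ) : ι' = ι := by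
  symm
  apply perm_eq_of_Ncount
  intro p q hp hq
  rw [← rank_corner_smat hp hq ι, ← rank_corner_smat hp hq ι',
    ← rank_corner_congr hp hq (Smat ι) hbu hbt,
    ← rank_corner_congr hp hq (Smat ι') hcu hct, heq]



/-! ### Existence -/

def Spartial (ι : Equiv.Perm (Fin m)) : Matrix (Fin m) (Fin m) ℂ :=
  Matrix.of fun i j => if ι i = j ∧ i ≠ j then (if i < j then (1:ℂ) else -1) else 0

lemma Spartial_one : (Spartial (1 : Equiv.Perm (Fin m))) = 0 := by
  ext i j
  simp only [Spartial, Matrix.of_apply, Matrix.zero_apply, ite_eq_right_iff]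
  rintro ⟨h1, h2⟩
  exact absurd h1 h2

lemma tri_mul {X Y : Matrix (Fin m) (Fin m) ℂ} (hX : ∀ i j, i < j → X i j = 0)
    (hY : ∀ i j, i < j → Y i j = 0) : ∀ i j, i < j → (X * Y) i j = 0 := by
  intro i j hij
  rw [Matrix.mul_apply]
  apply Finset.sum_eq_zero
  intro k _
  rcases lt_or_ge i k with h | h
  · rw [hX i k h, zero_mul]
  · rw [hY k j (lt_of_le_of_lt h hij), mul_zero]

def pairMat (u v : Fin m) (c : ℂ) : Matrix (Fin m) (Fin m) ℂ :=
  Matrix.of fun i j =>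
    (if i = u then (if j = v then c else 0) else 0) +
    (if i = v then (if j = u then -c else 0) else 0)

lemma pairMat_transpose {u v : Fin m} (huv : u ≠ v) (c : ℂ) :
    (pairMat u v c)ᵀ = -(pairMat u v c) := by
  ext i j
  simp only [pairMat, transpose_apply, Matrix.of_apply, Matrix.neg_apply]
  by_cases h1 : i = u <;> by_cases h2 : i = v <;> by_cases h3 : j = u <;>
    by_cases h4 : j = v <;> simp_all

lemma pairMat_mul_left {u v : Fin m} (huv : u ≠ v) (c : ℂ) (L : Matrix (Fin m) (Fin m) ℂ)
    (hLu : ∀ i, L i u = if i = u then 1 else 0)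
    (hLv : ∀ i, L i v = if i = v then 1 else 0) :
    L * pairMat u v c = pairMat u v c := by
  ext i j
  rw [Matrix.mul_apply]
  have hterm : ∀ k, L i k * pairMat u v c k j
      = L i k * (if k = u then (if j = v then c else 0) else 0)
        + L i k * (if k = v then (if j = u then -c else 0) else 0) := by
    intro k
    simp only [pairMat, Matrix.of_apply]
    ring
  rw [Finset.sum_congr rfl fun k _ => hterm k, Finset.sum_add_distrib,
    sum_mul_ite u _ _, sum_mul_ite v _ _, hLu i, hLv i]
  simp only [pairMat, Matrix.of_apply]
  by_cases h1 : i = u <;> by_cases h2 : i = v <;> simp [h1, h2, huv, Ne.symm huv]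

lemma pairMat_mul_right {u v : Fin m} (huv : u ≠ v) (c : ℂ)
    (L : Matrix (Fin m) (Fin m) ℂ)
    (hLu : ∀ i, L i u = if i = u then 1 else 0)
    (hLv : ∀ i, L i v = if i = v then 1 else 0) :
    pairMat u v c * Lᵀ = pairMat u v c := by
  have h := pairMat_mul_left huv c L hLu hLv
  calc pairMat u v c * Lᵀ = ((pairMat u v c)ᵀᵀ) * Lᵀ := by rw [transpose_transpose]
    _ = (L * (pairMat u v c)ᵀ)ᵀ := by rw [transpose_mul, transpose_transpose]
    _ = (L * (-(pairMat u v c)))ᵀ := by rw [pairMat_transpose huv]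
    _ = (-(L * pairMat u v c))ᵀ := by rw [Matrix.mul_neg]
    _ = pairMat u v c := by rw [h, transpose_neg, pairMat_transpose huv, neg_neg]

lemma exists_decomp_aux (N : ℕ) : ∀ (s : Finset (Fin m)), s.card ≤ N →
    ∀ A : Matrix (Fin m) (Fin m) ℂ, Aᵀ = -A →
    (∀ i j, i ∉ s ∨ j ∉ s → A i j = 0) →
    (∀ x : Fin m → ℂ, (∀ i, i ∉ s → x i = 0) → A.mulVec x = 0 → x = 0) →
    ∃ ι : Equiv.Perm (Fin m), ι * ι = 1 ∧ (∀ i, ι i = i ↔ i ∉ s) ∧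
      ∃ L : Matrix (Fin m) (Fin m) ℂ, IsUnit L ∧ (∀ i j, i < j → L i j = 0) ∧
        (∀ i j, j ∉ s → L i j = if i = j then (1:ℂ) else 0) ∧
        A = L * Spartial ι * Lᵀ := by
  have empty_case : ∀ A : Matrix (Fin m) (Fin m) ℂ,
      (∀ i j, i ∉ (∅ : Finset (Fin m)) ∨ j ∉ (∅ : Finset (Fin m)) → A i j = 0) →
      ∃ ι : Equiv.Perm (Fin m), ι * ι = 1 ∧ (∀ i, ι i = i ↔ i ∉ (∅ : Finset (Fin m))) ∧
      ∃ L : Matrix (Fin m) (Fin m) ℂ, IsUnit L ∧ (∀ i j, i < j → L i j = 0) ∧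
        (∀ i j, j ∉ (∅ : Finset (Fin m)) → L i j = if i = j then (1:ℂ) else 0) ∧
        A = L * Spartial ι * Lᵀ := by
    intro A hsupp
    have hA0 : A = 0 := by
      ext i j
      exact hsupp i j (Or.inl (Finset.notMem_empty i))
    refine ⟨1, by simp, fun i => by simp, 1, isUnit_one,
      fun i j hij => Matrix.one_apply_ne (ne_of_lt hij), fun i j _ => Matrix.one_apply, ?_⟩
    rw [Spartial_one, hA0]
    simp
  induction N with
  | zero =>
    intro s hcard A hanti hsupp hinj
    have hs : s = ∅ := Finset.card_eq_zero.mp (Nat.le_zero.mp hcard)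
    subst hs
    exact empty_case A hsupp
  | succ N IH =>
    intro s hcard A hanti hsupp hinj
    rcases eq_or_ne s ∅ with hs | hs
    · subst hs; exact empty_case A hsupp
    have hsne : s.Nonempty := Finset.nonempty_iff_ne_empty.mpr hs
    -- basic setup
    set i0 := s.min' hsne with hi0def
    have hi0s : i0 ∈ s := s.min'_mem hsne
    have hant : ∀ i j, A j i = -A i j := by
      intro i j
      have := congrFun (congrFun hanti i) j
      simpa using this
    have hdiag : ∀ i, A i i = 0 := by
      intro i
      have h := hant i i
      linear_combination (1/2 : ℂ) * h
    have hout : ∀ i, i ∉ s → ∀ j, A i j = 0 := fun i hi j => hsupp i j (Or.inl hi)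
    have hrow_ex : ∃ j, A i0 j ≠ 0 := by
      by_contra h
      push_neg at h
      have hx0 : A.mulVec (Pi.single i0 1) = 0 := by
        funext i
        have : A.mulVec (Pi.single i0 1) i = A i i0 := by
          simp [Matrix.mulVec, dotProduct, Pi.single_apply, mul_ite]
        rw [this, hant i0 i, h i, neg_zero]
        rfl
      have hxs : ∀ i, i ∉ s → (Pi.single i0 (1:ℂ) : Fin m → ℂ) i = 0 := by
        intro i hi
        exact Pi.single_eq_of_ne (fun he => hi (by rw [he]; exact hi0s)) 1
      have := hinj _ hxs hx0
      have h1 := congrFun this i0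
      simp at h1
    have hTne : (Finset.univ.filter (fun j => A i0 j ≠ 0)).Nonempty := by
      obtain ⟨j, hj⟩ := hrow_ex
      exact ⟨j, by simp [hj]⟩
    set j0 := (Finset.univ.filter (fun j => A i0 j ≠ 0)).min' hTne with hj0def
    have ha : A i0 j0 ≠ 0 :=
      (Finset.mem_filter.mp ((Finset.univ.filter (fun j => A i0 j ≠ 0)).min'_mem hTne)).2
    have hmin : ∀ j, j < j0 → A i0 j = 0 := by
      intro j hj
      by_contra h
      exact absurd (Finset.min'_le _ j (by simp [h])) (not_le.mpr hj)
    have hj0s : j0 ∈ s := by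
      by_contra h
      exact ha (hsupp i0 j0 (Or.inr h))
    have hi0j0 : i0 ≠ j0 := fun h => ha (h ▸ hdiag i0)
    have hi0lt : i0 < j0 := lt_of_le_of_ne (s.min'_le j0 hj0s) hi0j0
    have hcoli0 : ∀ i, i < j0 → A i i0 = 0 := by
      intro i hi
      rw [hant i0 i, hmin i hi, neg_zero]
    have hAji : A j0 i0 = -(A i0 j0) := hant i0 j0
    -- elimination data
    set pv : Fin m → ℂ := fun i => if i = i0 ∨ i = j0 then 0 else A i j0 / A i0 j0 with hpv
    set qv : Fin m → ℂ := fun i => if i = i0 ∨ i = j0 then 0 else -(A i i0) / A i0 j0 with hqv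
    have hpv_i0 : pv i0 = 0 := by simp [hpv]
    have hpv_j0 : pv j0 = 0 := by simp [hpv]
    have hqv_i0 : qv i0 = 0 := by simp [hqv]
    have hqv_j0 : qv j0 = 0 := by simp [hqv]
    have hpv_out : ∀ i, i ∉ s → pv i = 0 := by
      intro i hi
      by_cases h : i = i0 ∨ i = j0
      · simp [hpv, h]
      · simp [hpv, h, hout i hi j0]
    have hqv_out : ∀ i, i ∉ s → qv i = 0 := by
      intro i hi
      by_cases h : i = i0 ∨ i = j0
      · simp [hqv, h]
      · simp [hqv, h, hout i hi i0]
    set C : Matrix (Fin m) (Fin m) ℂ :=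
      Matrix.of (fun i k => (if k = i0 then pv i else 0) + (if k = j0 then qv i else 0)) with hC
    have hC_apply : ∀ i k, C i k = (if k = i0 then pv i else 0) + (if k = j0 then qv i else 0) :=
      fun i k => rfl
    have hC_tri : ∀ i j, i < j → C i j = 0 := by
      intro i j hij
      rw [hC_apply]
      have h1 : (if j = i0 then pv i else 0) = 0 := by
        by_cases h : j = i0
        · subst h
          have : i ∉ s := fun hi => absurd (s.min'_le i hi) (not_le.mpr hij)
          simp [hpv_out i this]
        · simp [h]
      have h2 : (if j = j0 then qv i else 0) = 0 := by
        by_cases h : j = j0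
        · subst h
          by_cases h' : i = i0 ∨ i = j0
          · simp [hqv, h']
          · simp [hqv, h', hcoli0 i hij]
        · simp [h]
      rw [h1, h2, add_zero]
    have hCmul : ∀ (M : Matrix (Fin m) (Fin m) ℂ) i j,
        (C * M) i j = pv i * M i0 j + qv i * M j0 j := by
      intro M i j
      rw [Matrix.mul_apply]
      have : ∀ k, C i k * M k j = (if k = i0 then pv i else 0) * M k j
          + (if k = j0 then qv i else 0) * M k j := by
        intro k; rw [hC_apply, add_mul]
      rw [Finset.sum_congr rfl fun k _ => this k, Finset.sum_add_distrib,
        sum_ite_mul i0 _ _, sum_ite_mul j0 _ _]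
    have hmulCt : ∀ (M : Matrix (Fin m) (Fin m) ℂ) i j,
        (M * Cᵀ) i j = M i i0 * pv j + M i j0 * qv j := by
      intro M i j
      rw [Matrix.mul_apply]
      have : ∀ k, M i k * Cᵀ k j = M i k * (if k = i0 then pv j else 0)
          + M i k * (if k = j0 then qv j else 0) := by
        intro k
        rw [Matrix.transpose_apply, hC_apply, mul_add]
      rw [Finset.sum_congr rfl fun k _ => this k, Finset.sum_add_distrib,
        sum_mul_ite i0 _ _, sum_mul_ite j0 _ _]
    have hCC : C * C = 0 := by
      ext i j
      rw [hCmul C i j]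
      have h1 : C i0 j = 0 := by rw [hC_apply, hpv_i0, hqv_i0]; simp
      have h2 : C j0 j = 0 := by rw [hC_apply, hpv_j0, hqv_j0]; simp
      rw [h1, h2, mul_zero, mul_zero, add_zero]
      rfl
    set L1 : Matrix (Fin m) (Fin m) ℂ := 1 - C with hL1
    set L1inv : Matrix (Fin m) (Fin m) ℂ := 1 + C with hL1inv
    have hL1_mul : L1 * L1inv = 1 := by
      rw [hL1, hL1inv]
      have h : (1 - C) * (1 + C) = 1 - C * C := by noncomm_ring
      rw [h, hCC, sub_zero]
    have hL1inv_mul : L1inv * L1 = 1 := by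
      rw [hL1, hL1inv]
      have h : (1 + C) * (1 - C) = 1 - C * C := by noncomm_ring
      rw [h, hCC, sub_zero]
    set B : Matrix (Fin m) (Fin m) ℂ := L1 * A * L1ᵀ with hBdef
    have hBexpand : B = A - C * A - A * Cᵀ + C * A * Cᵀ := by
      rw [hBdef, hL1, Matrix.transpose_sub, Matrix.transpose_one]
      noncomm_ring
    have hB : ∀ i j, B i j = A i j - (pv i * A i0 j + qv i * A j0 j)
        - (A i i0 * pv j + A i j0 * qv j)
        + ((pv i * A i0 i0 + qv i * A j0 i0) * pv j
          + (pv i * A i0 j0 + qv i * A j0 j0) * qv j) := by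
      intro i j
      have h1 : (C * A * Cᵀ) i j = (C * A) i i0 * pv j + (C * A) i j0 * qv j :=
        hmulCt (C * A) i j
      rw [hBexpand]
      simp only [Matrix.sub_apply, Matrix.add_apply]
      rw [hCmul A i j, hmulCt A i j, h1, hCmul A i i0, hCmul A i j0]
    have hBi0 : ∀ j, B i0 j = A i0 j - A i0 j0 * qv j := by
      intro j
      rw [hB, hpv_i0, hqv_i0, hdiag i0]
      ring
    have hBj0 : ∀ j, B j0 j = A j0 j + A i0 j0 * pv j := by
      intro j
      rw [hB, hpv_j0, hqv_j0, hdiag j0, hAji]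
      ring
    have hBi0_val : ∀ j, j ≠ i0 → j ≠ j0 → B i0 j = 0 := by
      intro j h1 h2
      have hq : qv j = A i0 j / A i0 j0 := by
        have : ¬(j = i0 ∨ j = j0) := by tauto
        rw [hqv]
        simp only [this, if_false]
        rw [hant i0 j]
        ring
      rw [hBi0 j, hq]
      field_simp
      ring
    have hBj0_val : ∀ j, j ≠ i0 → j ≠ j0 → B j0 j = 0 := by
      intro j h1 h2
      have hp : pv j = -(A j0 j) / A i0 j0 := by
        have : ¬(j = i0 ∨ j = j0) := by tauto
        rw [hpv]
        simp only [this, if_false]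
        rw [hant j0 j]
      rw [hBj0 j, hp]
      field_simp
      ring
    have hBi0j0 : B i0 j0 = A i0 j0 := by rw [hBi0 j0, hqv_j0, mul_zero, sub_zero]
    have hBi0i0 : B i0 i0 = 0 := by rw [hBi0 i0, hqv_i0, mul_zero, sub_zero, hdiag]
    have hBj0i0 : B j0 i0 = -(A i0 j0) := by rw [hBj0 i0, hpv_i0, mul_zero, add_zero, hAji]
    have hBj0j0 : B j0 j0 = 0 := by rw [hBj0 j0, hpv_j0, mul_zero, add_zero, hdiag]
    have hBout : ∀ i, i ∉ s → ∀ j, B i j = 0 := by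
      intro i hi j
      rw [hB, hpv_out i hi, hqv_out i hi, hout i hi j, hout i hi i0, hout i hi j0]
      ring
    -- the two-by-two block and the remainder
    set S1 : Matrix (Fin m) (Fin m) ℂ := pairMat i0 j0 1 with hS1
    set S2 : Matrix (Fin m) (Fin m) ℂ := pairMat i0 j0 (A i0 j0) with hS2
    have hS2_apply : ∀ i j, S2 i j = (if i = i0 then (if j = j0 then A i0 j0 else 0) else 0)
        + (if i = j0 then (if j = i0 then -(A i0 j0) else 0) else 0) := fun i j => rfl
    set A'' : Matrix (Fin m) (Fin m) ℂ := B - S2 with hA''def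
    set s' : Finset (Fin m) := s \ {i0, j0} with hs'def
    have hmem' : ∀ i, i ∈ s' ↔ i ∈ s ∧ i ≠ i0 ∧ i ≠ j0 := by
      intro i
      simp [hs'def, Finset.mem_sdiff, not_or]
    have hi0ns' : i0 ∉ s' := by simp [hmem']
    have hj0ns' : j0 ∉ s' := by simp [hmem']
    have hcard' : s'.card ≤ N := by
      have h1 : s' ⊆ s.erase i0 := by
        intro x hx
        rw [Finset.mem_erase]
        exact ⟨((hmem' x).mp hx).2.1, ((hmem' x).mp hx).1⟩
      have h2 := Finset.card_le_card h1
      rw [Finset.card_erase_of_mem hi0s] at h2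
      omega
    have hBT : Bᵀ = -B := by
      rw [hBdef, Matrix.transpose_mul, Matrix.transpose_mul, Matrix.transpose_transpose, hanti]
      noncomm_ring
    have hanti'' : A''ᵀ = -A'' := by
      rw [hA''def, Matrix.transpose_sub, hBT, hS2, pairMat_transpose hi0j0]
      noncomm_ring
    have hA''anti : ∀ i j, A'' i j = -A'' j i := by
      intro i j
      have := congrFun (congrFun hanti'' j) i
      simp only [Matrix.transpose_apply, Matrix.neg_apply] at this
      rw [this]
    have hrow'' : ∀ i, i ∉ s' → ∀ j, A'' i j = 0 := by
      intro i hi j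
      have hi' : i = i0 ∨ i = j0 ∨ i ∉ s := by
        by_cases h1 : i = i0
        · exact Or.inl h1
        by_cases h2 : i = j0
        · exact Or.inr (Or.inl h2)
        by_cases h3 : i ∈ s
        · exact absurd ((hmem' i).mpr ⟨h3, h1, h2⟩) hi
        · exact Or.inr (Or.inr h3)
      have hA''a : A'' i j = B i j - S2 i j := rfl
      rcases hi' with rfl | rfl | hns
      · rw [hA''a, hS2_apply]
        by_cases hj : j = j0
        · subst hj
          rw [hBi0j0]
          simp [hi0j0]
        · by_cases hj2 : j = i0
          · subst hj2
            rw [hBi0i0]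
            simp [hi0j0, hj]
          · rw [hBi0_val j hj2 hj]
            simp [hi0j0, hj, hj2]
      · rw [hA''a, hS2_apply]
        by_cases hj : j = i0
        · subst hj
          rw [hBj0i0]
          simp [Ne.symm hi0j0]
        · by_cases hj2 : j = j0
          · subst hj2
            rw [hBj0j0]
            simp [Ne.symm hi0j0, hj]
          · rw [hBj0_val j hj hj2]
            simp [Ne.symm hi0j0, hj, hj2]
      · rw [hA''a, hBout i hns j, hS2_apply]
        have h1 : i ≠ i0 := fun h => hns (h ▸ hi0s)
        have h2 : i ≠ j0 := fun h => hns (h ▸ hj0s)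
        simp [h1, h2]
    have hsupp'' : ∀ i j, i ∉ s' ∨ j ∉ s' → A'' i j = 0 := by
      intro i j h
      rcases h with h | h
      · exact hrow'' i h j
      · rw [hA''anti i j, hrow'' j h i, neg_zero]
    have hinj'' : ∀ x : Fin m → ℂ, (∀ i, i ∉ s' → x i = 0) → A''.mulVec x = 0 → x = 0 := by
      intro x hxs hx0
      have hxi0 : x i0 = 0 := hxs i0 hi0ns'
      have hxj0 : x j0 = 0 := hxs j0 hj0ns'
      have hS2x : S2.mulVec x = 0 := by
        funext i
        have : S2.mulVec x i = ∑ j, S2 i j * x j := rfl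
        rw [this]
        have hterm : ∀ j, S2 i j * x j
            = (if j = j0 then (if i = i0 then A i0 j0 else 0) else 0) * x j
              + (if j = i0 then (if i = j0 then -(A i0 j0) else 0) else 0) * x j := by
          intro j
          have swap1 : ∀ (P Q : Prop) [Decidable P] [Decidable Q] (c : ℂ),
              (if P then (if Q then c else 0) else 0)
                = (if Q then (if P then c else 0) else 0) := by
            intro P Q _ _ c
            by_cases hP : P <;> by_cases hQ : Q <;> simp [hP, hQ]
          rw [hS2_apply, add_mul, swap1 (i = i0) (j = j0) (A i0 j0),
            swap1 (i = j0) (j = i0) (-(A i0 j0))]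
        rw [Finset.sum_congr rfl fun j _ => hterm j, Finset.sum_add_distrib,
          sum_ite_mul j0 _ _, sum_ite_mul i0 _ _, hxi0, hxj0, mul_zero, mul_zero, add_zero]
        rfl
      have hBx : B.mulVec x = 0 := by
        have hBs : B = A'' + S2 := by rw [hA''def]; abel
        rw [hBs, Matrix.add_mulVec, hx0, hS2x, add_zero]
      have hALx : (A * L1ᵀ).mulVec x = 0 := by
        have h1 : L1.mulVec ((A * L1ᵀ).mulVec x) = 0 := by
          rw [Matrix.mulVec_mulVec, ← Matrix.mul_assoc, ← hBdef, hBx]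
        calc (A * L1ᵀ).mulVec x
            = (L1inv * L1).mulVec ((A * L1ᵀ).mulVec x) := by
              rw [hL1inv_mul, Matrix.one_mulVec]
          _ = L1inv.mulVec (L1.mulVec ((A * L1ᵀ).mulVec x)) := by
              simp only [Matrix.mulVec_mulVec, Matrix.mul_assoc]
          _ = 0 := by rw [h1, Matrix.mulVec_zero]
      have hAy : A.mulVec (L1ᵀ.mulVec x) = 0 := by
        rw [Matrix.mulVec_mulVec]; exact hALx
      have hysupp : ∀ k, k ∉ s → L1ᵀ.mulVec x k = 0 := by
        intro k hk
        have hk1 : k ≠ i0 := fun h => hk (h ▸ hi0s)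
        have hk2 : k ≠ j0 := fun h => hk (h ▸ hj0s)
        have hkns' : k ∉ s' := fun h => hk ((hmem' k).mp h).1
        have h1 : L1ᵀ.mulVec x k = ∑ i, L1 i k * x i := by
          simp [Matrix.mulVec, dotProduct, Matrix.transpose_apply]
        have h2 : ∀ i, L1 i k * x i = (if i = k then (1:ℂ) else 0) * x i := by
          intro i
          congr 1
          rw [hL1, Matrix.sub_apply, hC_apply]
          simp [hk1, hk2, Matrix.one_apply]
        rw [h1, Finset.sum_congr rfl fun i _ => h2 i, sum_ite_mul k _ _, one_mul]
        exact hxs k hkns'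
      have hy0 := hinj _ hysupp hAy
      calc x = (L1invᵀ * L1ᵀ).mulVec x := by
            rw [← Matrix.transpose_mul, hL1_mul, Matrix.transpose_one, Matrix.one_mulVec]
        _ = L1invᵀ.mulVec (L1ᵀ.mulVec x) := by rw [Matrix.mulVec_mulVec]
        _ = 0 := by rw [hy0, Matrix.mulVec_zero]
    obtain ⟨ι'', hinvol'', hfix'', L'', hL''u, hL''tri, hL''id, hA''eq⟩ :=
      IH s' hcard' A'' hanti'' hsupp'' hinj''
    have hι''inv : ∀ y, ι'' (ι'' y) = y := by
      intro y
      calc ι'' (ι'' y) = (ι'' * ι'') y := rfl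
        _ = (1 : Equiv.Perm (Fin m)) y := by rw [hinvol'']
        _ = y := rfl
    have hι''i0 : ι'' i0 = i0 := (hfix'' i0).mpr hi0ns'
    have hι''j0 : ι'' j0 = j0 := (hfix'' j0).mpr hj0ns'
    set ι : Equiv.Perm (Fin m) := Equiv.swap i0 j0 * ι'' with hιdef
    have happ : ∀ x, ι x = Equiv.swap i0 j0 (ι'' x) := fun x => rfl
    have hιi0 : ι i0 = j0 := by rw [happ, hι''i0, Equiv.swap_apply_left]
    have hιj0 : ι j0 = i0 := by rw [happ, hι''j0, Equiv.swap_apply_right]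
    have hnotin : ∀ x, x ≠ i0 → x ≠ j0 → ι'' x ≠ i0 ∧ ι'' x ≠ j0 := by
      intro x h1 h2
      constructor
      · intro h
        have := hι''inv x
        rw [h, hι''i0] at this
        exact h1 this.symm
      · intro h
        have := hι''inv x
        rw [h, hι''j0] at this
        exact h2 this.symm
    have hιother : ∀ x, x ≠ i0 → x ≠ j0 → ι x = ι'' x := by
      intro x h1 h2
      obtain ⟨n1, n2⟩ := hnotin x h1 h2
      rw [happ, Equiv.swap_apply_of_ne_of_ne n1 n2]
    have hinvol : ι * ι = 1 := by
      apply Equiv.ext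
      intro x
      rw [Equiv.Perm.mul_apply, Equiv.Perm.one_apply]
      by_cases h1 : x = i0
      · subst h1; rw [hιi0, hιj0]
      by_cases h2 : x = j0
      · subst h2; rw [hιj0, hιi0]
      obtain ⟨n1, n2⟩ := hnotin x h1 h2
      rw [hιother x h1 h2, hιother _ n1 n2, hι''inv]
    have hfix : ∀ i, ι i = i ↔ i ∉ s := by
      intro i
      by_cases h1 : i = i0
      · subst h1
        rw [hιi0]
        exact iff_of_false (Ne.symm hi0j0) (not_not_intro hi0s)
      by_cases h2 : i = j0
      · subst h2
        rw [hιj0]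
        exact iff_of_false hi0j0 (not_not_intro hj0s)
      rw [hιother i h1 h2, hfix'' i]
      constructor
      · intro h hins
        exact h ((hmem' i).mpr ⟨hins, h1, h2⟩)
      · intro h hins'
        exact h ((hmem' i).mp hins').1
    -- decomposition of Spartial
    have hSdec : Spartial ι = S1 + Spartial ι'' := by
      ext i j
      have hgoal : Spartial ι i j = S1 i j + Spartial ι'' i j → _ := id
      show Spartial ι i j = (S1 + Spartial ι'') i j
      rw [Matrix.add_apply]
      by_cases h1 : i = i0
      · subst h1
        have hs1 : S1 i0 j = if j = j0 then 1 else 0 := by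
          rw [hS1]
          show (if i0 = i0 then (if j = j0 then (1:ℂ) else 0) else 0)
            + (if i0 = j0 then (if j = i0 then -(1:ℂ) else 0) else 0) = _
          simp [hi0j0]
        have hsp : Spartial ι'' i0 j = 0 := by
          show (if ι'' i0 = j ∧ i0 ≠ j then (if i0 < j then (1:ℂ) else -1) else 0) = 0
          rw [hι''i0]
          by_cases h : i0 = j <;> simp [h]
        rw [hs1, hsp, add_zero]
        show (if ι i0 = j ∧ i0 ≠ j then (if i0 < j then (1:ℂ) else -1) else 0) = _
        rw [hιi0]
        by_cases hj : j = j0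
        · subst hj
          simp [hi0j0, hi0lt]
        · have hne : j0 ≠ j := fun h => hj h.symm
          simp [hne, hj]
      by_cases h2 : i = j0
      · subst h2
        have hs1 : S1 j0 j = if j = i0 then (-1:ℂ) else 0 := by
          rw [hS1]
          show (if j0 = i0 then (if j = j0 then (1:ℂ) else 0) else 0)
            + (if j0 = j0 then (if j = i0 then -(1:ℂ) else 0) else 0) = _
          simp [Ne.symm hi0j0]
        have hsp : Spartial ι'' j0 j = 0 := by
          show (if ι'' j0 = j ∧ j0 ≠ j then (if j0 < j then (1:ℂ) else -1) else 0) = 0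
          rw [hι''j0]
          by_cases h : j0 = j <;> simp [h]
        rw [hs1, hsp, add_zero]
        show (if ι j0 = j ∧ j0 ≠ j then (if j0 < j then (1:ℂ) else -1) else 0) = _
        rw [hιj0]
        by_cases hj : j = i0
        · subst hj
          simp [Ne.symm hi0j0, not_lt.mpr (le_of_lt hi0lt)]
        · have hne : i0 ≠ j := fun h => hj h.symm
          simp [hne, hj]
      · have hs1 : S1 i j = 0 := by
          rw [hS1]
          show (if i = i0 then (if j = j0 then (1:ℂ) else 0) else 0)
            + (if i = j0 then (if j = i0 then -(1:ℂ) else 0) else 0) = 0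
          simp [h1, h2]
        rw [hs1, zero_add]
        show (if ι i = j ∧ i ≠ j then (if i < j then (1:ℂ) else -1) else 0)
          = (if ι'' i = j ∧ i ≠ j then (if i < j then (1:ℂ) else -1) else 0)
        rw [hιother i h1 h2]
    -- the diagonal scaling
    set D : Matrix (Fin m) (Fin m) ℂ :=
      Matrix.diagonal (fun i => if i = i0 then A i0 j0 else 1) with hD
    have hDunit : IsUnit D := by
      rw [Matrix.isUnit_iff_isUnit_det, hD, Matrix.det_diagonal, isUnit_iff_ne_zero]
      apply Finset.prod_ne_zero_iff.mpr
      intro i _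
      by_cases h : i = i0 <;> simp [h, ha]
    have hDtri : ∀ i j, i < j → D i j = 0 := by
      intro i j hij
      rw [hD]
      exact Matrix.diagonal_apply_ne _ (ne_of_lt hij)
    have hL''i0col : ∀ i, L'' i i0 = if i = i0 then 1 else 0 := fun i => hL''id i i0 hi0ns'
    have hL''j0col : ∀ i, L'' i j0 = if i = j0 then 1 else 0 := fun i => hL''id i j0 hj0ns'
    have e1 : L'' * Spartial ι * L''ᵀ = S1 + A'' := by
      rw [hSdec, Matrix.mul_add, Matrix.add_mul, hS1,
        pairMat_mul_left hi0j0 1 L'' hL''i0col hL''j0col,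
        pairMat_mul_right hi0j0 1 L'' hL''i0col hL''j0col, ← hA''eq]
    have hDS1 : D * S1 * Dᵀ = S2 := by
      have hDT : Dᵀ = D := by rw [hD, Matrix.diagonal_transpose]
      rw [hDT]
      ext i j
      have h1 : (D * S1 * D) i j
          = (if i = i0 then A i0 j0 else 1) * S1 i j * (if j = i0 then A i0 j0 else 1) := by
        rw [hD, Matrix.mul_diagonal, Matrix.diagonal_mul]
      rw [h1, hS1, hS2_apply]
      show (if i = i0 then A i0 j0 else 1) * ((if i = i0 then (if j = j0 then (1:ℂ) else 0) else 0)
        + (if i = j0 then (if j = i0 then -(1:ℂ) else 0) else 0)) * (if j = i0 then A i0 j0 else 1)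
        = (if i = i0 then (if j = j0 then A i0 j0 else 0) else 0)
          + (if i = j0 then (if j = i0 then -(A i0 j0) else 0) else 0)
      by_cases hb1 : i = i0
      · subst hb1
        by_cases hb4 : j = j0
        · subst hb4
          simp [hi0j0, Ne.symm hi0j0]
        · by_cases hb3 : j = i0
          · subst hb3
            simp [hi0j0, Ne.symm hi0j0, hb4]
          · simp [hi0j0, hb3, hb4]
      · by_cases hb2 : i = j0
        · subst hb2
          by_cases hb3 : j = i0
          · subst hb3
            simp [hi0j0, Ne.symm hi0j0]
          · simp [Ne.symm hi0j0, hb3]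
        · simp [hb1, hb2]
    have hDA'' : D * A'' * Dᵀ = A'' := by
      have hDT : Dᵀ = D := by rw [hD, Matrix.diagonal_transpose]
      rw [hDT]
      ext i j
      have h1 : (D * A'' * D) i j
          = (if i = i0 then A i0 j0 else 1) * A'' i j * (if j = i0 then A i0 j0 else 1) := by
        rw [hD, Matrix.mul_diagonal, Matrix.diagonal_mul]
      rw [h1]
      by_cases hb1 : i = i0
      · subst hb1
        rw [hrow'' i0 hi0ns' j]
        ring
      by_cases hb3 : j = i0
      · subst hb3
        rw [hsupp'' i i0 (Or.inr hi0ns')]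
        ring
      simp [hb1, hb3]
    have e2 : D * (S1 + A'') * Dᵀ = S2 + A'' := by
      rw [Matrix.mul_add, Matrix.add_mul, hDS1, hDA'']
    set Lfin : Matrix (Fin m) (Fin m) ℂ := L1inv * (D * L'') with hLfin
    have hL1inv_tri : ∀ i j, i < j → L1inv i j = 0 := by
      intro i j hij
      rw [hL1inv, Matrix.add_apply, Matrix.one_apply_ne (ne_of_lt hij), hC_tri i j hij,
        add_zero]
    have htri : ∀ i j, i < j → Lfin i j = 0 := by
      rw [hLfin]
      exact tri_mul hL1inv_tri (tri_mul hDtri hL''tri)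
    have hL1invu : IsUnit L1inv := by
      rw [Matrix.isUnit_iff_isUnit_det]
      have hdet : L1inv.det * L1.det = 1 := by
        rw [← Matrix.det_mul, hL1inv_mul, Matrix.det_one]
      exact isUnit_iff_exists_inv.mpr ⟨_, hdet⟩
    have hunit : IsUnit Lfin := by
      rw [hLfin]
      exact hL1invu.mul (hDunit.mul hL''u)
    have hid : ∀ i j, j ∉ s → Lfin i j = if i = j then (1:ℂ) else 0 := by
      intro i j hj
      have hjne1 : j ≠ i0 := fun h => hj (h ▸ hi0s)
      have hjne2 : j ≠ j0 := fun h => hj (h ▸ hj0s)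
      have hjns' : j ∉ s' := fun h => hj ((hmem' j).mp h).1
      have hDL : ∀ k, (D * L'') k j = if k = j then (1:ℂ) else 0 := by
        intro k
        rw [hD, Matrix.diagonal_mul, hL''id k j hjns']
        by_cases hk : k = j
        · subst hk
          simp [hjne1]
        · simp [hk]
      have h1 : Lfin i j = ∑ k, L1inv i k * (D * L'') k j := by
        rw [hLfin, Matrix.mul_apply]
      rw [h1, Finset.sum_congr rfl fun k _ => by rw [hDL k], sum_mul_ite j _ _, mul_one]
      rw [hL1inv, Matrix.add_apply, hC_apply]
      simp [hjne1, hjne2, Matrix.one_apply]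
    have hfinal : A = Lfin * Spartial ι * Lfinᵀ := by
      have t1 : Lfin * Spartial ι * Lfinᵀ
          = L1inv * (D * (L'' * Spartial ι * L''ᵀ) * Dᵀ) * L1invᵀ := by
        rw [hLfin]
        simp only [Matrix.transpose_mul, Matrix.mul_assoc]
      rw [t1, e1, e2]
      have hsum : S2 + A'' = B := by rw [hA''def]; abel
      rw [hsum, hBdef]
      have hT : L1ᵀ * L1invᵀ = 1 := by
        rw [← Matrix.transpose_mul, hL1inv_mul, Matrix.transpose_one]
      calc A = (L1inv * L1) * A * (L1ᵀ * L1invᵀ) := by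
            rw [hL1inv_mul, hT, one_mul, mul_one]
        _ = L1inv * (L1 * A * L1ᵀ) * L1invᵀ := by
            simp only [Matrix.mul_assoc]
    exact ⟨ι, hinvol, hfix, Lfin, hunit, htri, hid, hfinal⟩

end CongrOrbit

open CongrOrbit in
/-- every invertible antisymmetric matrix is `B₋`-congruent to `S_ι`
for a unique fixed-point-free involution `ι`. -/
theorem congruence_orbit_classification {n : ℕ}
    (A : Matrix (Fin (2*n)) (Fin (2*n)) ℂ) (hA : IsUnit A) (hanti : Aᵀ = -A) :
    ∃ ι : Equiv.Perm (Fin (2*n)), isFPF ι ∧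
      (∃ b : Matrix (Fin (2*n)) (Fin (2*n)) ℂ, IsUnit b ∧
        (∀ i j : Fin (2*n), i < j → b i j = 0) ∧ A = b * Smat ι * bᵀ) ∧
      (∀ ι' : Equiv.Perm (Fin (2*n)), isFPF ι' →
        (∃ b : Matrix (Fin (2*n)) (Fin (2*n)) ℂ, IsUnit b ∧
          (∀ i j : Fin (2*n), i < j → b i j = 0) ∧ A = b * Smat ι' * bᵀ) →
        ι' = ι) := by
  classical
  have hinj : ∀ x : Fin (2*n) → ℂ,
      (∀ i, i ∉ (Finset.univ : Finset (Fin (2*n))) → x i = 0) → A.mulVec x = 0 → x = 0 := by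
    intro x _ hx
    have hdet : IsUnit A.det := (Matrix.isUnit_iff_isUnit_det A).mp hA
    have h1 : A⁻¹ * A = 1 := Matrix.nonsing_inv_mul A hdet
    calc x = (A⁻¹ * A).mulVec x := by rw [h1, Matrix.one_mulVec]
      _ = A⁻¹.mulVec (A.mulVec x) := by rw [Matrix.mulVec_mulVec]
      _ = 0 := by rw [hx, Matrix.mulVec_zero]
  obtain ⟨ι, hinvol, hfix, L, hLu, hLtri, _, hAeq⟩ :=
    exists_decomp_aux (m := 2*n) (Finset.univ : Finset (Fin (2*n))).card Finset.univ le_rfl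
      A hanti (fun i j h => by rcases h with h | h <;> exact absurd (Finset.mem_univ _) h)
      hinj
  have hfpf : isFPF ι :=
    ⟨hinvol, fun i h => absurd (Finset.mem_univ i) ((hfix i).mp h)⟩
  have hSm : Smat ι = Spartial ι := by
    ext i j
    show (if ι i = j then (if i < j then (1:ℂ) else -1) else 0)
      = (if ι i = j ∧ i ≠ j then (if i < j then (1:ℂ) else -1) else 0)
    by_cases h : ι i = j
    · have hij : i ≠ j := fun he => hfpf.2 i (he ▸ h)
      simp [h, hij]
    · simp [h]
  refine ⟨ι, hfpf, ⟨L, hLu, hLtri, by rw [hSm]; exact hAeq⟩, ?_⟩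
  rintro ι' hfpf' ⟨b, hbu, hbt, hAeq'⟩
  have heq : L * Smat ι * Lᵀ = b * Smat ι' * bᵀ := by
    rw [hSm, ← hAeq]
    exact hAeq'
  exact unique_invol hLu hLtri hbu hbt heq
end
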